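/- (Amalgamation property for T^m_0.) Let (⟨(H_n,E_n) : n<ω⟩, f) be a template of arity k and let m < ω. Let M_0, M_1, M_2 be T^m_0-structures with M_0 a substructure of both M_1 and M_2 (i.e. the domain of M_0 is contained in the domains of M_1 and M_2, Q^{M_0}_η = Q^{M_i}_η ∩ M_0 for each predicate and i = 1,2, and R^{M_0} = R^{M_i} ∩ (M_0)^k for i = 1,2), and suppose the domains satisfy M_1 ∩ M_2 = M_0. Then the structure N with domain M_1 ∪ M_2, with Q^N_η = Q^{M_1}_η ∪ Q^{M_2}_η for each η ∈ X_H with lgn(η) ≤ m, and with R^N = R^{M_1} ∪ R^{M_2}, is a T^m_0-structure, and M_1 and M_2 are substructures of N. -/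

import Mathlib

/-- Prepend an element to a `(k-1)`-tuple, forming a `k`-tuple. -/
def fcons {α : Type*} (k : ℕ) (s : α) (v : Fin (k - 1) → α) : Fin k → α :=
  fun j => if h : (j : ℕ) = 0 then s else v ⟨(j : ℕ) - 1, by have := j.isLt; omega⟩

/-- A template of arity `k`: a sequence of finite `k`-full hypergraphs `(H n, E n)`
(vertices of `H n` are `0, …, H n - 1`, edges are `k`-tuples) together with a function
`f : ℕ → ℕ ∖ {0}` satisfying the conditions of Definition 2.4. -/
structure Template (k : ℕ) where
  H : ℕ → ℕ
  E : (n : ℕ) → Set (Fin k → ℕ)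
  f : ℕ → ℕ
  /-- `f` takes values in `ℕ ∖ {0}`. -/
  f_pos : ∀ n, 0 < f n
  /-- (0) `f(n) → ∞` as `n → ∞`. -/
  f_lim : ∀ N : ℕ, ∃ n : ℕ, ∀ m, n ≤ m → N ≤ f m
  /-- each `H n` is a positive integer (nonempty vertex set). -/
  H_pos : ∀ n, 0 < H n
  /-- edges live on the vertex set `{0, …, H n - 1}`. -/
  edge_lt : ∀ n, ∀ e ∈ E n, ∀ i, e i < H n
  /-- (1) `k`-fullness: the edge relation is invariant under permuting coordinates. -/
  edge_symm : ∀ n, ∀ e ∈ E n, ∀ σ : Equiv.Perm (Fin k), e ∘ σ ∈ E n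
  /-- (1) `k`-fullness: every `k`-tuple with fewer than `k` distinct entries is an edge. -/
  edge_of_rep : ∀ n, ∀ e : Fin k → ℕ, (∀ i, e i < H n) → ¬ Function.Injective e → e ∈ E n
  /-- (2) `f n ≤ H n`. -/
  f_le_H : ∀ n, f n ≤ H n
  /-- (3) Extension: for `t = f n` and any `(k-1)`-tuples `ι 0, …, ι (t-1)` from `H n`,
  there is `s ∈ H n` forming an edge with each of them. -/
  extension : ∀ n, ∀ ι : Fin (f n) → (Fin (k - 1) → ℕ),
      (∀ ℓ j, ι ℓ j < H n) → ∃ s < H n, ∀ ℓ, fcons k s (ι ℓ) ∈ E n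

/-- `H_∞`: the set of functions `ρ : ℕ → ℕ` with `ρ n < H n` for all `n`. -/
def Hinf {k : ℕ} (T : Template k) : Set (ℕ → ℕ) := {ρ | ∀ n, ρ n < T.H n}

/-- `E_∞`: the `k`-ary relation on `H_∞` holding iff the levelwise tuples are edges. -/
def Einf {k : ℕ} (T : Template k) (e : Fin k → (ℕ → ℕ)) : Prop :=
  ∀ n, (fun i => e i n) ∈ T.E n

/-- `X_H`: finite sequences `η` with `η n < H n` for all `n <` length of `η`. -/
def XH {k : ℕ} (T : Template k) : Set (List ℕ) :=
  {η | ∀ n, ∀ h : n < η.length, η.get ⟨n, h⟩ < T.H n}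

/-- A `T^m₀`-structure with domain the set `D ⊆ α`: unary predicates `Q η` for `η ∈ X_H` with
`lgn η ≤ m` and a `k`-ary relation `R`, satisfying the universal axioms of `T^m₀`. -/
structure Tm0On {k : ℕ} (T : Template k) (m : ℕ) {α : Type*} (D : Set α) where
  Q : List ℕ → Set α
  R : Set (Fin k → α)
  /-- the predicates are subsets of the domain. -/
  Q_sub : ∀ η, Q η ⊆ D
  /-- the relation lives on the domain. -/
  R_sub : ∀ e ∈ R, ∀ i, e i ∈ D
  /-- `R` is invariant under permuting coordinates. -/
  R_symm : ∀ e ∈ R, ∀ σ : Equiv.Perm (Fin k), e ∘ σ ∈ R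
  /-- `R` holds only on `k`-tuples of pairwise distinct elements. -/
  R_inj : ∀ e ∈ R, Function.Injective e
  /-- `Q ⟨⟩` names everything. -/
  Q_nil : Q [] = D
  /-- `Q ν` refines `Q η` when `η ⊴ ν`, `lgn ν ≤ m`. -/
  Q_mono : ∀ η ν : List ℕ, ν ∈ XH T → ν.length ≤ m → η <+: ν → Q ν ⊆ Q η
  /-- For `lgn η < m`, the `Q (η ⌢ ⟨i⟩)`, `i < H (lgn η)`, are pairwise disjoint... -/
  Q_disj : ∀ η ∈ XH T, η.length < m →
      ∀ i j : ℕ, i < T.H η.length → j < T.H η.length → i ≠ j →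
      Q (η ++ [i]) ∩ Q (η ++ [j]) = ∅
  /-- ...and cover `Q η`. -/
  Q_cover : ∀ η ∈ XH T, η.length < m → ∀ a ∈ Q η, ∃ i < T.H η.length, a ∈ Q (η ++ [i])
  /-- No edges across predicates whose levelwise tuple is a non-edge of the template. -/
  forbidden : ∀ η : Fin k → List ℕ, (∀ j, η j ∈ XH T) → (∀ j, (η j).length ≤ m) →
      ∀ n : ℕ, (∀ j, n < (η j).length) →
      (fun j => (η j).getD n 0) ∉ T.E n →
      ∀ e : Fin k → α, (∀ j, e j ∈ Q (η j)) → e ∉ R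

/-- `S` is a substructure of `S'`: the domain is contained in the larger domain, each
predicate of `S` is the restriction of the corresponding predicate of `S'` to the smaller
domain, and likewise for the relation. -/
def IsSubOn {k : ℕ} (T : Template k) (m : ℕ) {α : Type*} {D D' : Set α}
    (S : Tm0On T m D) (S' : Tm0On T m D') : Prop :=
  D ⊆ D' ∧ (∀ η : List ℕ, η ∈ XH T → η.length ≤ m → S.Q η = S'.Q η ∩ D) ∧
    S.R = {e | e ∈ S'.R ∧ ∀ i, e i ∈ D}

/-- Amalgamation for `T^m₀`: if `M₀` is a common substructure of the
`T^m₀`-structures `M₁, M₂` and the domains satisfy `M₁ ∩ M₂ = M₀`, then the union structure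
(union of domains, predicates, and relations) is a `T^m₀`-structure containing `M₁` and `M₂`
as substructures. -/
theorem statement5 {k : ℕ} (hk : 2 ≤ k) (T : Template k) (m : ℕ) {α : Type*}
    {D0 D1 D2 : Set α}
    (S0 : Tm0On T m D0) (S1 : Tm0On T m D1) (S2 : Tm0On T m D2)
    (h01 : IsSubOn T m S0 S1) (h02 : IsSubOn T m S0 S2)
    (hD : D1 ∩ D2 = D0) :
    ∃ SN : Tm0On T m (D1 ∪ D2),
      (∀ η : List ℕ, η ∈ XH T → η.length ≤ m → SN.Q η = S1.Q η ∪ S2.Q η) ∧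
      SN.R = S1.R ∪ S2.R ∧
      IsSubOn T m S1 SN ∧ IsSubOn T m S2 SN := by
  obtain ⟨hD1, hQ1, hR1⟩ := h01
  obtain ⟨hD2, hQ2, hR2⟩ := h02
  -- elements of D1 ∩ D2 are in D0
  have hmem : ∀ a : α, a ∈ D1 → a ∈ D2 → a ∈ D0 := by
    intro a h1 h2; rw [← hD]; exact ⟨h1, h2⟩
  -- If a ∈ S2.Q η and a ∈ D1 (with η admissible), then a ∈ S1.Q η
  have key21 : ∀ η : List ℕ, η ∈ XH T → η.length ≤ m →
      ∀ a, a ∈ S2.Q η → a ∈ D1 → a ∈ S1.Q η := by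
    intro η hη hlen a ha haD
    have h0 : a ∈ S0.Q η := by
      rw [hQ2 η hη hlen]; exact ⟨ha, hmem a haD (S2.Q_sub η ha)⟩
    rw [hQ1 η hη hlen] at h0; exact h0.1
  have key12 : ∀ η : List ℕ, η ∈ XH T → η.length ≤ m →
      ∀ a, a ∈ S1.Q η → a ∈ D2 → a ∈ S2.Q η := by
    intro η hη hlen a ha haD
    have h0 : a ∈ S0.Q η := by
      rw [hQ1 η hη hlen]; exact ⟨ha, hmem a (S1.Q_sub η ha) haD⟩
    rw [hQ2 η hη hlen] at h0; exact h0.1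
  have hext : ∀ η : List ℕ, η ∈ XH T → ∀ i : ℕ, i < T.H η.length →
      (η ++ [i]) ∈ XH T := by
    intro η hη i hi n hn
    simp only [List.length_append, List.length_singleton] at hn
    rcases Nat.lt_or_ge n η.length with h | h
    · have := hη n h
      simpa [List.get_eq_getElem, List.getElem_append_left h] using this
    · have hn' : n = η.length := by omega
      subst hn'
      simpa [List.get_eq_getElem, List.getElem_append_right (le_refl _)] using hi
  refine ⟨{
    Q := fun η => S1.Q η ∪ S2.Q η
    R := S1.R ∪ S2.R
    Q_sub := fun η => Set.union_subset_union (S1.Q_sub η) (S2.Q_sub η)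
    R_sub := by
      rintro e (he | he) i
      · exact Or.inl (S1.R_sub e he i)
      · exact Or.inr (S2.R_sub e he i)
    R_symm := by
      rintro e (he | he) σ
      · exact Or.inl (S1.R_symm e he σ)
      · exact Or.inr (S2.R_symm e he σ)
    R_inj := by rintro e (he | he); exacts [S1.R_inj e he, S2.R_inj e he]
    Q_nil := by rw [S1.Q_nil, S2.Q_nil]
    Q_mono := by
      rintro η ν hν hlen hpre a (ha | ha)
      · exact Or.inl (S1.Q_mono η ν hν hlen hpre ha)
      · exact Or.inr (S2.Q_mono η ν hν hlen hpre ha)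
    Q_disj := by
      intro η hη hlen i j hi hj hij
      ext a
      simp only [Set.mem_inter_iff, Set.mem_union, Set.mem_empty_iff_false, iff_false]
      have hηi := hext η hη i hi
      have hηj := hext η hη j hj
      have hleni : (η ++ [i]).length ≤ m := by
        simp only [List.length_append, List.length_singleton]; omega
      have hlenj : (η ++ [j]).length ≤ m := by
        simp only [List.length_append, List.length_singleton]; omega
      rintro ⟨hai, haj⟩
      -- reduce to both in S1 or both in S2
      have h1 : a ∈ S1.Q (η ++ [i]) ∩ S1.Q (η ++ [j]) ∨
          a ∈ S2.Q (η ++ [i]) ∩ S2.Q (η ++ [j]) := by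
        rcases hai with hai | hai <;> rcases haj with haj | haj
        · exact Or.inl ⟨hai, haj⟩
        · exact Or.inl ⟨hai, key21 _ hηj hlenj a haj (S1.Q_sub _ hai)⟩
        · exact Or.inl ⟨key21 _ hηi hleni a hai (S1.Q_sub _ haj), haj⟩
        · exact Or.inr ⟨hai, haj⟩
      rcases h1 with h1 | h1
      · have := S1.Q_disj η hη hlen i j hi hj hij
        exact absurd (this ▸ h1) (by simp)
      · have := S2.Q_disj η hη hlen i j hi hj hij
        exact absurd (this ▸ h1) (by simp)
    Q_cover := by
      rintro η hη hlen a (ha | ha)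
      · obtain ⟨i, hi, hai⟩ := S1.Q_cover η hη hlen a ha
        exact ⟨i, hi, Or.inl hai⟩
      · obtain ⟨i, hi, hai⟩ := S2.Q_cover η hη hlen a ha
        exact ⟨i, hi, Or.inr hai⟩
    forbidden := by
      rintro η hη hlen n hn hnE e he (heR | heR)
      · have : ∀ j, e j ∈ S1.Q (η j) := by
          intro j
          rcases he j with h | h
          · exact h
          · exact key21 _ (hη j) (hlen j) _ h (S1.R_sub e heR j)
        exact S1.forbidden η hη hlen n hn hnE e this heR
      · have : ∀ j, e j ∈ S2.Q (η j) := by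
          intro j
          rcases he j with h | h
          · exact key12 _ (hη j) (hlen j) _ h (S2.R_sub e heR j)
          · exact h
        exact S2.forbidden η hη hlen n hn hnE e this heR
  }, fun _ _ _ => rfl, rfl, ?_, ?_⟩
  · refine ⟨Set.subset_union_left, fun η hη hlen => ?_, ?_⟩
    · ext a
      simp only [Set.mem_inter_iff, Set.mem_union]
      constructor
      · intro ha; exact ⟨Or.inl ha, S1.Q_sub η ha⟩
      · rintro ⟨ha | ha, haD⟩
        · exact ha
        · exact key21 η hη hlen a ha haD
    · ext e
      simp only [Set.mem_setOf_eq, Set.mem_union]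
      constructor
      · intro he; exact ⟨Or.inl he, S1.R_sub e he⟩
      · rintro ⟨he | he, heD⟩
        · exact he
        · have h0 : e ∈ S0.R := by
            rw [hR2]; exact ⟨he, fun i => hmem _ (heD i) (S2.R_sub e he i)⟩
          rw [hR1] at h0; exact h0.1
  · refine ⟨Set.subset_union_right, fun η hη hlen => ?_, ?_⟩
    · ext a
      simp only [Set.mem_inter_iff, Set.mem_union]
      constructor
      · intro ha; exact ⟨Or.inr ha, S2.Q_sub η ha⟩
      · rintro ⟨ha | ha, haD⟩
        · exact key12 η hη hlen a ha haD
        · exact ha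
    · ext e
      simp only [Set.mem_setOf_eq, Set.mem_union]
      constructor
      · intro he; exact ⟨Or.inr he, S2.R_sub e he⟩
      · rintro ⟨he | he, heD⟩
        · have h0 : e ∈ S0.R := by
            rw [hR1]; exact ⟨he, fun i => hmem _ (S1.R_sub e he i) (heD i)⟩
          rw [hR2] at h0; exact h0.1
        · exact he
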